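/- arXiv:1407.8356 — 2 statements merged into one kernel-verified Lean document; each statement's English description precedes it below -/
import Mathlib

section
/- Let (X,μ) be a measure space, let E and Ê be measurable subsets of X of positive finite measure, and let φ be a non-negative measurable function defined on E ∪ Ê with φ^p integrable there, such that: (1) (1/μ(E))∫_E φ dμ = (1/μ(Ê))∫_Ê φ dμ = A; (2) φ(x) ≤ A for every x ∈ (E ∪ Ê) \ (E ∩ Ê); and (3) φ(x) ≤ φ(y) for every x ∈ Ê \ E and every y ∈ E. Then for every p > 1, (1/μ(E))∫_E φ^p dμ ≤ (1/μ(Ê))∫_Ê φ^p dμ. -/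
open MeasureTheory Set

private lemma tangent_aux {A t p : ℝ} (hA : 0 < A) (ht : 0 ≤ t) (hp : 1 ≤ p) :
    A ^ p + p * A ^ (p - 1) * (t - A) ≤ t ^ p := by
  have hz : (-1 : ℝ) ≤ t / A - 1 := by
    have : 0 ≤ t / A := div_nonneg ht hA.le
    linarith
  have hb := one_add_mul_self_le_rpow_one_add hz hp
  have h1 : (1 : ℝ) + (t / A - 1) = t / A := by ring
  rw [h1, Real.div_rpow ht hA.le] at hb
  have hAp : (0:ℝ) < A ^ p := Real.rpow_pos_of_pos hA p
  have hbb := mul_le_mul_of_nonneg_left hb hAp.le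
  have h2 : A ^ p * (t ^ p / A ^ p) = t ^ p := by field_simp
  rw [h2] at hbb
  have hA1 : A ^ (p - 1) = A ^ p / A := by
    rw [Real.rpow_sub hA, Real.rpow_one]
  rw [hA1]
  have h3 : A ^ p + p * (A ^ p / A) * (t - A) = A ^ p * (1 + p * (t / A - 1)) := by
    field_simp
  rw [h3]
  exact hbb

private lemma chord_above_aux {c A t p : ℝ} (hc : 0 ≤ c) (hct : c ≤ t) (htA : t ≤ A)
    (hcA : c < A) (hp : 1 ≤ p) :
    t ^ p ≤ c ^ p + (A ^ p - c ^ p) / (A - c) * (t - c) := by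
  have hAc : (0:ℝ) < A - c := sub_pos.2 hcA
  rcases eq_or_lt_of_le hct with rfl | hct'
  · simp
  rcases eq_or_lt_of_le htA with rfl | htA'
  · have h := div_mul_cancel₀ (t ^ p - c ^ p) hAc.ne'
    linarith
  have hA0 : (0:ℝ) ≤ A := hc.trans hcA.le
  have hs := (convexOn_rpow hp).slope_mono_adjacent (mem_Ici.2 hc) (mem_Ici.2 hA0) hct' htA'
  rw [div_le_div_iff₀ (by linarith) (by linarith)] at hs
  rw [← sub_le_iff_le_add', div_mul_eq_mul_div, le_div_iff₀ hAc]
  nlinarith [hs]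

private lemma chord_below_aux {c A t p : ℝ} (ht0 : 0 ≤ t) (htc : t ≤ c) (hcA : c < A)
    (hp : 1 ≤ p) :
    c ^ p + (A ^ p - c ^ p) / (A - c) * (t - c) ≤ t ^ p := by
  have hAc : (0:ℝ) < A - c := sub_pos.2 hcA
  rcases eq_or_lt_of_le htc with rfl | htc'
  · simp
  have hA0 : (0:ℝ) ≤ A := (ht0.trans htc).trans hcA.le
  have hs := (convexOn_rpow hp).slope_mono_adjacent (mem_Ici.2 ht0) (mem_Ici.2 hA0) htc' hcA
  rw [div_le_div_iff₀ (by linarith) hAc] at hs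
  rw [add_comm, ← le_sub_iff_add_le, div_mul_eq_mul_div, div_le_iff₀ hAc]
  nlinarith [hs]

set_option maxHeartbeats 1000000 in
/-- Lemma: if a nonnegative function `φ` has the same average `A` over two sets `E` and
`Ê`, is bounded by `A` off `E ∩ Ê`, and its values on `Ê \ E` do not exceed its values
on `E`, then for every `p > 1` the `p`-th power average over `E` does not exceed the one
over `Ê`. -/
theorem average_pow_le_of_averages_eq
    {X : Type*} [MeasurableSpace X] (μ : Measure X)
    (E Ehat : Set X) (hE : MeasurableSet E) (hEhat : MeasurableSet Ehat)
    (hμE : 0 < μ E) (hμE' : μ E < ⊤) (hμEhat : 0 < μ Ehat) (hμEhat' : μ Ehat < ⊤)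
    (φ : X → ℝ) (hφm : Measurable φ) (hφ0 : ∀ x ∈ E ∪ Ehat, 0 ≤ φ x)
    (p : ℝ) (hp : 1 < p)
    (hφint : IntegrableOn (fun x => φ x ^ p) (E ∪ Ehat) μ)
    (A : ℝ)
    (havgE : (1 / (μ E).toReal) * ∫ x in E, φ x ∂μ = A)
    (havgEhat : (1 / (μ Ehat).toReal) * ∫ x in Ehat, φ x ∂μ = A)
    (hbd : ∀ x ∈ (E ∪ Ehat) \ (E ∩ Ehat), φ x ≤ A)
    (hcmp : ∀ x ∈ Ehat \ E, ∀ y ∈ E, φ x ≤ φ y) :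
    (1 / (μ E).toReal) * ∫ x in E, φ x ^ p ∂μ ≤
      (1 / (μ Ehat).toReal) * ∫ x in Ehat, φ x ^ p ∂μ := by
  -- measurability of pieces
  have hJmeas : MeasurableSet (E ∩ Ehat) := hE.inter hEhat
  have hEdmeas : MeasurableSet (E \ Ehat) := hE.diff hEhat
  have hHdmeas : MeasurableSet (Ehat \ E) := hEhat.diff hE
  have hUmeas : MeasurableSet (E ∪ Ehat) := hE.union hEhat
  have hμU : μ (E ∪ Ehat) < ⊤ :=
    lt_of_le_of_lt (measure_union_le E Ehat) (ENNReal.add_lt_top.2 ⟨hμE', hμEhat'⟩)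
  have hμJ : μ (E ∩ Ehat) < ⊤ := lt_of_le_of_lt (measure_mono inter_subset_left) hμE'
  have hμEd : μ (E \ Ehat) < ⊤ := lt_of_le_of_lt (measure_mono diff_subset) hμE'
  have hμHd : μ (Ehat \ E) < ⊤ := lt_of_le_of_lt (measure_mono diff_subset) hμEhat'
  set a := (μ E).toReal with haDef
  set b := (μ Ehat).toReal with hbDef
  set m := (μ (E ∩ Ehat)).toReal with hmDef
  set al := (μ (E \ Ehat)).toReal with halDef
  set be := (μ (Ehat \ E)).toReal with hbeDef
  have ha : 0 < a := ENNReal.toReal_pos hμE.ne' hμE'.ne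
  have hb : 0 < b := ENNReal.toReal_pos hμEhat.ne' hμEhat'.ne
  have ham : a = m + al := by
    rw [haDef, hmDef, halDef, ← ENNReal.toReal_add hμJ.ne hμEd.ne,
      measure_inter_add_diff (μ := μ) E hEhat]
  have hbm : b = m + be := by
    have h2 := measure_inter_add_diff (μ := μ) Ehat hE
    rw [inter_comm Ehat E] at h2
    rw [hbDef, hmDef, hbeDef, ← ENNReal.toReal_add hμJ.ne hμHd.ne, h2]
  -- integrability
  have hint1U : IntegrableOn φ (E ∪ Ehat) μ := by
    have hcst : IntegrableOn (fun _ : X => (1:ℝ)) (E ∪ Ehat) μ :=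
      integrableOn_const hμU.ne
    have hg : IntegrableOn (fun x => 1 + φ x ^ p) (E ∪ Ehat) μ := hcst.add hφint
    refine hg.mono' hφm.aestronglyMeasurable.restrict ?_
    filter_upwards [ae_restrict_mem hUmeas] with x hx
    have h0 := hφ0 x hx
    rw [Real.norm_eq_abs, abs_of_nonneg h0]
    rcases le_total (φ x) 1 with h | h
    · have hnn : (0:ℝ) ≤ φ x ^ p := Real.rpow_nonneg h0 p
      linarith only [h, hnn]
    · have h1 : φ x ^ (1:ℝ) ≤ φ x ^ p := Real.rpow_le_rpow_of_exponent_le h hp.le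
      rw [Real.rpow_one] at h1
      linarith only [h1]
  have hint1E : IntegrableOn φ E μ := hint1U.mono_set subset_union_left
  have hint1H : IntegrableOn φ Ehat μ := hint1U.mono_set subset_union_right
  have hint1J : IntegrableOn φ (E ∩ Ehat) μ := hint1E.mono_set inter_subset_left
  have hint1Ed : IntegrableOn φ (E \ Ehat) μ := hint1E.mono_set diff_subset
  have hint1Hd : IntegrableOn φ (Ehat \ E) μ := hint1H.mono_set diff_subset
  have hintpE : IntegrableOn (fun x => φ x ^ p) E μ := hφint.mono_set subset_union_left
  have hintpH : IntegrableOn (fun x => φ x ^ p) Ehat μ := hφint.mono_set subset_union_right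
  have hintpJ : IntegrableOn (fun x => φ x ^ p) (E ∩ Ehat) μ := hintpE.mono_set inter_subset_left
  have hintpEd : IntegrableOn (fun x => φ x ^ p) (E \ Ehat) μ := hintpE.mono_set diff_subset
  have hintpHd : IntegrableOn (fun x => φ x ^ p) (Ehat \ E) μ := hintpH.mono_set diff_subset
  -- splittings
  have hsplE : (∫ x in E ∩ Ehat, φ x ∂μ) + ∫ x in E \ Ehat, φ x ∂μ = ∫ x in E, φ x ∂μ :=
    integral_inter_add_diff hEhat hint1E
  have hsplH : (∫ x in E ∩ Ehat, φ x ∂μ) + ∫ x in Ehat \ E, φ x ∂μ = ∫ x in Ehat, φ x ∂μ := by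
    have h := integral_inter_add_diff (μ := μ) (f := φ) (s := Ehat) (t := E) hE hint1H
    rwa [inter_comm Ehat E] at h
  have hsplEp : (∫ x in E ∩ Ehat, φ x ^ p ∂μ) + ∫ x in E \ Ehat, φ x ^ p ∂μ
      = ∫ x in E, φ x ^ p ∂μ := integral_inter_add_diff hEhat hintpE
  have hsplHp : (∫ x in E ∩ Ehat, φ x ^ p ∂μ) + ∫ x in Ehat \ E, φ x ^ p ∂μ
      = ∫ x in Ehat, φ x ^ p ∂μ := by
    have h := integral_inter_add_diff (μ := μ) (f := fun x => φ x ^ p) (s := Ehat) (t := E)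
      hE hintpH
    rwa [inter_comm Ehat E] at h
  set S := ∫ x in E ∩ Ehat, φ x ∂μ with hSdef
  set T := ∫ x in E \ Ehat, φ x ∂μ with hTdef
  set U := ∫ x in Ehat \ E, φ x ∂μ with hUdef
  set Sp := ∫ x in E ∩ Ehat, φ x ^ p ∂μ with hSpdef
  set Tp := ∫ x in E \ Ehat, φ x ^ p ∂μ with hTpdef
  set Up := ∫ x in Ehat \ E, φ x ^ p ∂μ with hUpdef
  -- averages
  have hIE : ∫ x in E, φ x ∂μ = A * a := by
    rw [← havgE]; field_simp
  have hIH : ∫ x in Ehat, φ x ∂μ = A * b := by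
    rw [← havgEhat]; field_simp
  have hST : S + T = A * a := by rw [hsplE, hIE]
  have hSU : S + U = A * b := by rw [hsplH, hIH]
  -- the infimum of φ on E
  have hEne : E.Nonempty := nonempty_of_measure_ne_zero hμE.ne'
  set c := sInf (φ '' E) with hcDef
  have hbdd : BddBelow (φ '' E) := ⟨0, by rintro _ ⟨y, hy, rfl⟩; exact hφ0 y (Or.inl hy)⟩
  have hcE : ∀ y ∈ E, c ≤ φ y := fun y hy => csInf_le hbdd ⟨y, hy, rfl⟩
  have hc0 : 0 ≤ c :=
    le_csInf (hEne.image φ) (by rintro _ ⟨y, hy, rfl⟩; exact hφ0 y (Or.inl hy))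
  have hcH : ∀ x ∈ Ehat \ E, φ x ≤ c := fun x hx =>
    le_csInf (hEne.image φ) (by rintro _ ⟨y, hy, rfl⟩; exact hcmp x hx y hy)
  -- c ≤ A
  have hAc : c ≤ A := by
    have h1 : ∫ x in E, (fun _ : X => c) x ∂μ ≤ ∫ x in E, φ x ∂μ :=
      setIntegral_mono_on (integrableOn_const hμE'.ne) hint1E hE
        (fun x hx => hcE x hx)
    rw [setIntegral_const, smul_eq_mul, measureReal_def, ← haDef, hIE] at h1
    have := (mul_le_mul_iff_of_pos_right ha).1 (by linarith only [h1] : c * a ≤ A * a)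
    exact this
  -- linear integral helper
  have lin : ∀ (s : Set X), μ s < ⊤ → IntegrableOn φ s μ → ∀ w r : ℝ,
      ∫ x in s, (w + r * φ x) ∂μ = w * (μ s).toReal + r * ∫ x in s, φ x ∂μ := by
    intro s hfin hint w r
    rw [integral_add (integrableOn_const hfin.ne : IntegrableOn (fun _ : X => w) s μ) (hint.const_mul r),
      integral_const_mul, setIntegral_const, smul_eq_mul, measureReal_def]
    ring
  by_cases hlt : c < A
  · -- main case
    have hA0 : 0 < A := lt_of_le_of_lt hc0 hlt
    set l := (A ^ p - c ^ p) / (A - c) with hldef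
    set k := p * A ^ (p - 1) - l with hkdef
    have hl : l * (A - c) = A ^ p - c ^ p := div_mul_cancel₀ _ (sub_pos.2 hlt).ne'
    have hk0 : 0 ≤ k := by
      have htc := tangent_aux hA0 hc0 hp.le
      rw [hkdef, sub_nonneg, hldef, div_le_iff₀ (sub_pos.2 hlt)]
      linarith only [htc]
    -- pointwise bounds integrated
    have hF1 : Tp ≤ (c ^ p - l * c) * al + l * T := by
      have hmono : Tp ≤ ∫ x in E \ Ehat, ((c ^ p - l * c) + l * φ x) ∂μ := by
        refine setIntegral_mono_on hintpEd
          ((integrableOn_const hμEd.ne).add (hint1Ed.const_mul l)) hEdmeas ?_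
        intro x hx
        have h1 := chord_above_aux hc0 (hcE x hx.1)
          (hbd x ⟨Or.inl hx.1, fun hmem => hx.2 hmem.2⟩) hlt hp.le
        show φ x ^ p ≤ (c ^ p - l * c) + l * φ x
        rw [hldef]
        linarith only [h1]
      rwa [lin _ hμEd hint1Ed (c ^ p - l * c) l] at hmono
    have hF2 : (c ^ p - l * c) * be + l * U ≤ Up := by
      have hmono : (∫ x in Ehat \ E, ((c ^ p - l * c) + l * φ x) ∂μ) ≤ Up := by
        refine setIntegral_mono_on
          ((integrableOn_const hμHd.ne).add (hint1Hd.const_mul l)) hintpHd hHdmeas ?_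
        intro x hx
        have h1 := chord_below_aux (hφ0 x (Or.inr hx.1)) (hcH x hx) hlt hp.le
        show (c ^ p - l * c) + l * φ x ≤ φ x ^ p
        rw [hldef]
        linarith only [h1]
      rwa [lin _ hμHd hint1Hd (c ^ p - l * c) l] at hmono
    have hF3 : (c ^ p - l * c - k * A) * m + (l + k) * S ≤ Sp := by
      have hmono : (∫ x in E ∩ Ehat, ((c ^ p - l * c - k * A) + (l + k) * φ x) ∂μ) ≤ Sp := by
        refine setIntegral_mono_on
          ((integrableOn_const hμJ.ne).add (hint1J.const_mul (l + k))) hintpJ hJmeas ?_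
        intro x hx
        have ht := tangent_aux hA0 (hφ0 x (Or.inl hx.1)) hp.le
        show (c ^ p - l * c - k * A) + (l + k) * φ x ≤ φ x ^ p
        have hk1 : k * φ x = p * A ^ (p - 1) * φ x - l * φ x := by rw [hkdef]; ring
        have hk2 : k * A = p * A ^ (p - 1) * A - l * A := by rw [hkdef]; ring
        linarith only [ht, hl, hk1, hk2]
      rwa [lin _ hμJ hint1J (c ^ p - l * c - k * A) (l + k)] at hmono
    -- comparison bounds on T and U
    have hT_le : T ≤ A * al := by
      have h1 : T ≤ ∫ x in E \ Ehat, (fun _ : X => A) x ∂μ :=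
        setIntegral_mono_on hint1Ed (integrableOn_const hμEd.ne) hEdmeas
          (fun x hx => hbd x ⟨Or.inl hx.1, fun hmem => hx.2 hmem.2⟩)
      rw [setIntegral_const, smul_eq_mul, measureReal_def, ← halDef] at h1
      linarith only [h1]
    have hT_ge : c * al ≤ T := by
      have h1 : (∫ x in E \ Ehat, (fun _ : X => c) x ∂μ) ≤ T :=
        setIntegral_mono_on (integrableOn_const hμEd.ne) hint1Ed hEdmeas
          (fun x hx => hcE x hx.1)
      rw [setIntegral_const, smul_eq_mul, measureReal_def, ← halDef] at h1
      linarith only [h1]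
    have hU_le : U ≤ c * be := by
      have h1 : U ≤ ∫ x in Ehat \ E, (fun _ : X => c) x ∂μ :=
        setIntegral_mono_on hint1Hd (integrableOn_const hμHd.ne) hHdmeas
          (fun x hx => hcH x hx)
      rw [setIntegral_const, smul_eq_mul, measureReal_def, ← hbeDef] at h1
      linarith only [h1]
    have hal' : al = a - m := by linarith only [ham]
    have hbe' : be = b - m := by linarith only [hbm]
    have hba : b ≤ a := by
      by_contra hcon
      push_neg at hcon
      have hc1 : c * be = c * b - c * m := by rw [hbe']; ring
      have hc2 : c * al = c * a - c * m := by rw [hal']; ring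
      linarith only [hT_ge, hU_le, hST, hSU, hc1, hc2, mul_pos (sub_pos.2 hlt) (sub_pos.2 hcon)]
    have hSAm : A * m ≤ S := by
      have h1 : A * al = A * a - A * m := by rw [hal']; ring
      linarith only [hT_le, hST, h1]
    -- the key algebraic identity
    have hid : b * (((c ^ p - l * c - k * A) * m + (l + k) * S) + ((c ^ p - l * c) * al + l * T))
        - a * (((c ^ p - l * c - k * A) * m + (l + k) * S) + ((c ^ p - l * c) * be + l * U))
        = (b - a) * (k * (S - A * m)) := by
      have hT' : T = A * a - S := by linarith only [hST]
      have hU' : U = A * b - S := by linarith only [hSU]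
      rw [hT', hU', hal', hbe']
      ring
    have hbQ : b * Tp ≤ b * ((c ^ p - l * c) * al + l * T) :=
      mul_le_mul_of_nonneg_left hF1 hb.le
    have haR : a * ((c ^ p - l * c) * be + l * U) ≤ a * Up :=
      mul_le_mul_of_nonneg_left hF2 ha.le
    have hPS : (a - b) * ((c ^ p - l * c - k * A) * m + (l + k) * S) ≤ (a - b) * Sp :=
      mul_le_mul_of_nonneg_left hF3 (by linarith only [hba])
    have hZ : (b - a) * (k * (S - A * m)) ≤ 0 :=
      mul_nonpos_of_nonpos_of_nonneg (by linarith only [hba]) (mul_nonneg hk0 (by linarith only [hSAm]))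
    rw [← hsplEp, ← hsplHp, one_div_mul_eq_div, one_div_mul_eq_div, div_le_div_iff₀ ha hb]
    linarith only [hbQ, haR, hPS, hZ, hid]
  · -- degenerate case : c = A and φ is a.e. constant
    have hAeq : A = c := le_antisymm (not_lt.1 hlt) hAc
    have hcstE : IntegrableOn (fun _ : X => c) E μ := integrableOn_const hμE'.ne
    have hzero : ∫ x in E, (φ x - c) ∂μ = 0 := by
      rw [integral_sub hint1E hcstE, setIntegral_const, smul_eq_mul, measureReal_def, ← haDef, hIE, hAeq]
      ring
    have hnn : 0 ≤ᵐ[μ.restrict E] fun x => φ x - c := by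
      filter_upwards [ae_restrict_mem hE] with x hx
      have := hcE x hx
      simp only [Pi.zero_apply]
      linarith only [this]
    have haeE : φ =ᵐ[μ.restrict E] fun _ => c := by
      have h := (integral_eq_zero_iff_of_nonneg_ae hnn (hint1E.sub hcstE)).1 hzero
      filter_upwards [h] with x hx
      have : φ x - c = 0 := hx
      linarith only [this]
    have hEp : (∫ x in E, φ x ^ p ∂μ) = c ^ p * a := by
      have : (fun x => φ x ^ p) =ᵐ[μ.restrict E] fun _ => c ^ p := by
        filter_upwards [haeE] with x hx
        rw [hx]
      rw [integral_congr_ae this, setIntegral_const, smul_eq_mul, measureReal_def, ← haDef]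
      ring
    have haeJ : φ =ᵐ[μ.restrict (E ∩ Ehat)] fun _ => c :=
      ae_restrict_of_ae_restrict_of_subset inter_subset_left haeE
    have hSc : S = c * m := by
      rw [hSdef, integral_congr_ae haeJ, setIntegral_const, smul_eq_mul, measureReal_def, ← hmDef]
      ring
    have hUc : U = c * be := by
      have h1 : c * b = c * m + c * be := by rw [hbm]; ring
      rw [hAeq] at hSU
      linarith only [h1, hSU, hSc]
    have hcstHd : IntegrableOn (fun _ : X => c) (Ehat \ E) μ :=
      integrableOn_const hμHd.ne
    have hsub : ∫ x in Ehat \ E, (c - φ x) ∂μ = c * be - U := by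
      rw [integral_sub hcstHd hint1Hd, setIntegral_const, smul_eq_mul, ← hUdef, measureReal_def, ← hbeDef]
      ring
    have hzero2 : ∫ x in Ehat \ E, (c - φ x) ∂μ = 0 := by
      rw [hsub, hUc]; ring
    have hnn2 : 0 ≤ᵐ[μ.restrict (Ehat \ E)] fun x => c - φ x := by
      filter_upwards [ae_restrict_mem hHdmeas] with x hx
      simp only [Pi.zero_apply]
      linarith only [hcH x hx]
    have haeHd : φ =ᵐ[μ.restrict (Ehat \ E)] fun _ => c := by
      have h := (integral_eq_zero_iff_of_nonneg_ae hnn2 (hcstHd.sub hint1Hd)).1 hzero2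
      filter_upwards [h] with x hx
      have hx' : c - φ x = 0 := hx
      linarith only [hx']
    have hUp : Up = c ^ p * be := by
      have hcg : (fun x => φ x ^ p) =ᵐ[μ.restrict (Ehat \ E)] fun _ => c ^ p := by
        filter_upwards [haeHd] with x hx; rw [hx]
      rw [hUpdef, integral_congr_ae hcg, setIntegral_const, smul_eq_mul, measureReal_def, ← hbeDef]
      ring
    have hJp : Sp = c ^ p * m := by
      have hcg : (fun x => φ x ^ p) =ᵐ[μ.restrict (E ∩ Ehat)] fun _ => c ^ p := by
        filter_upwards [haeJ] with x hx; rw [hx]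
      rw [hSpdef, integral_congr_ae hcg, setIntegral_const, smul_eq_mul, measureReal_def, ← hmDef]
      ring
    have hHp : (∫ x in Ehat, φ x ^ p ∂μ) = c ^ p * b := by
      rw [← hsplHp, hJp, hUp, hbm]; ring
    rw [hEp, hHp, one_div_mul_eq_div, one_div_mul_eq_div, div_le_div_iff₀ ha hb]
    exact le_of_eq (by ring)
end

section
/- Let (X,μ) be a measure space, let Γ ⊆ I be measurable sets with 0 < μ(Γ) < μ(I) < ∞, let Δ = I \ Γ with μ(Δ) > 0, let p > 1, and let φ: I → [0,∞) be measurable with φ^p integrable on I. Then ∫_Δ φ^p dμ ≥ (1/μ(I)^{p−1})·(∫_I φ dμ)^p − (1/μ(Γ)^{p−1})·(∫_Γ φ dμ)^p. -/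
open MeasureTheory Set

private lemma radon_aux {a d α δ p : ℝ} (ha : 0 ≤ a) (hd : 0 ≤ d)
    (hα : 0 < α) (hδ : 0 < δ) (hp : 1 < p) :
    (a + d) ^ p / (α + δ) ^ (p - 1) ≤ a ^ p / α ^ (p - 1) + d ^ p / δ ^ (p - 1) := by
  have hαδ : 0 < α + δ := by linarith
  have key := (convexOn_rpow hp.le).2 (mem_Ici.2 (by positivity : (0:ℝ) ≤ a / α))
    (mem_Ici.2 (by positivity : (0:ℝ) ≤ d / δ))
    (by positivity : (0:ℝ) ≤ α / (α + δ)) (by positivity : (0:ℝ) ≤ δ / (α + δ))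
    (by field_simp)
  simp only [smul_eq_mul] at key
  have h1 : α / (α + δ) * (a / α) + δ / (α + δ) * (d / δ) = (a + d) / (α + δ) := by
    field_simp
  rw [h1, Real.div_rpow (by linarith) hαδ.le, Real.div_rpow ha hα.le,
    Real.div_rpow hd hδ.le] at key
  rw [Real.rpow_sub hαδ, Real.rpow_sub hα, Real.rpow_sub hδ, Real.rpow_one,
    Real.rpow_one, Real.rpow_one]
  have hA : (0:ℝ) < α ^ p := Real.rpow_pos_of_pos hα p
  have hD : (0:ℝ) < δ ^ p := Real.rpow_pos_of_pos hδ p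
  have hS : (0:ℝ) < (α + δ) ^ p := Real.rpow_pos_of_pos hαδ p
  have hmul := mul_le_mul_of_nonneg_right key hαδ.le
  rw [div_div_eq_mul_div, div_div_eq_mul_div, div_div_eq_mul_div]
  calc (a + d) ^ p * (α + δ) / (α + δ) ^ p
      = ((a + d) ^ p / (α + δ) ^ p) * (α + δ) := by ring
    _ ≤ (α / (α + δ) * (a ^ p / α ^ p) + δ / (α + δ) * (d ^ p / δ ^ p)) * (α + δ) := hmul
    _ = a ^ p * α / α ^ p + d ^ p * δ / δ ^ p := by field_simp

private lemma holder_step {X : Type*} [MeasurableSpace X] (μ : Measure X)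
    (S : Set X) (hS : MeasurableSet S) (hμS : μ S < ⊤)
    {p : ℝ} (hp : 1 < p) {φ : X → ℝ} (hφm : Measurable φ)
    (hφ0 : ∀ x ∈ S, 0 ≤ φ x)
    (hint : IntegrableOn (fun x => φ x ^ p) S μ) :
    MemLp φ (ENNReal.ofReal p) (μ.restrict S) ∧
      (∫ x in S, φ x ∂μ) ^ p ≤ (μ S).toReal ^ (p - 1) * ∫ x in S, φ x ^ p ∂μ := by
  have hp0 : (0:ℝ) < p := lt_trans one_pos hp
  have h0 : 0 ≤ᵐ[μ.restrict S] φ := (ae_restrict_iff' hS).2 (Filter.Eventually.of_forall hφ0)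
  have hnorm : Integrable (fun x => ‖φ x‖ ^ (ENNReal.ofReal p).toReal) (μ.restrict S) := by
    rw [ENNReal.toReal_ofReal hp0.le]
    refine hint.congr ?_
    filter_upwards [h0] with x hx
    rw [Real.norm_of_nonneg hx]
  have hmem : MemLp φ (ENNReal.ofReal p) (μ.restrict S) := by
    refine (memLp_norm_rpow_iff (p := ENNReal.ofReal p) (q := ENNReal.ofReal p)
      hφm.aestronglyMeasurable (by simp [ENNReal.ofReal_eq_zero, not_le, hp0]) ENNReal.ofReal_ne_top).1 ?_
    rw [ENNReal.div_self (by simp [ENNReal.ofReal_eq_zero, not_le, hp0]) ENNReal.ofReal_ne_top,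
      memLp_one_iff_integrable]
    exact hnorm
  refine ⟨hmem, ?_⟩
  haveI : IsFiniteMeasure (μ.restrict S) := ⟨by rwa [Measure.restrict_apply_univ]⟩
  have hq := Real.HolderConjugate.conjExponent hp
  set q := Real.conjExponent p with hqdef
  have h1 : MemLp (fun _ : X => (1:ℝ)) (ENNReal.ofReal q) (μ.restrict S) := memLp_const 1
  have hH := integral_mul_le_Lp_mul_Lq_of_nonneg hq h0
    (Filter.Eventually.of_forall fun _ => zero_le_one) hmem h1
  simp only [mul_one, Real.one_rpow] at hH
  rw [integral_const, measureReal_def, Measure.restrict_apply_univ, smul_eq_mul, mul_one] at hH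
  have hIa : 0 ≤ ∫ x in S, φ x ^ p ∂μ :=
    setIntegral_nonneg hS fun x hx => Real.rpow_nonneg (hφ0 x hx) p
  have hφi : 0 ≤ ∫ x in S, φ x ∂μ := setIntegral_nonneg hS hφ0
  have hpow := Real.rpow_le_rpow hφi hH hp0.le
  rw [Real.mul_rpow (Real.rpow_nonneg hIa _) (Real.rpow_nonneg ENNReal.toReal_nonneg _),
    ← Real.rpow_mul hIa, ← Real.rpow_mul ENNReal.toReal_nonneg,
    one_div_mul_cancel hp0.ne', Real.rpow_one] at hpow
  have hq' : 1 / q * p = p - 1 := by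
    rw [hqdef, Real.conjExponent]
    field_simp
  rw [hq'] at hpow
  linarith [hpow]

/-- For measurable sets `Γ ⊆ I` with `0 < μ(Γ) < μ(I) < ∞`, `Δ = I \ Γ` of positive
measure, `p > 1` and a nonnegative `φ` with `φ^p` integrable on `I`, one has
`∫_Δ φ^p dμ ≥ (1/μ(I)^{p−1})·(∫_I φ dμ)^p − (1/μ(Γ)^{p−1})·(∫_Γ φ dμ)^p`. -/
theorem integral_pow_diff_lower_bound
    {X : Type*} [MeasurableSpace X] (μ : Measure X)
    (I Γ Δ : Set X) (hI : MeasurableSet I) (hΓ : MeasurableSet Γ)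
    (hΓI : Γ ⊆ I) (hΔ : Δ = I \ Γ)
    (hμΓ : 0 < μ Γ) (hμΓI : μ Γ < μ I) (hμI : μ I < ⊤) (hμΔ : 0 < μ Δ)
    (p : ℝ) (hp : 1 < p)
    (φ : X → ℝ) (hφm : Measurable φ) (hφ0 : ∀ x ∈ I, 0 ≤ φ x)
    (hφint : IntegrableOn (fun x => φ x ^ p) I μ) :
    (1 / (μ I).toReal ^ (p - 1)) * (∫ x in I, φ x ∂μ) ^ p -
      (1 / (μ Γ).toReal ^ (p - 1)) * (∫ x in Γ, φ x ∂μ) ^ p ≤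
        ∫ x in Δ, φ x ^ p ∂μ := by
  have hΔsub : Δ ⊆ I := hΔ ▸ diff_subset
  have hΔm : MeasurableSet Δ := hΔ ▸ hI.diff hΓ
  have hμΔlt : μ Δ < ⊤ := lt_of_le_of_lt (measure_mono hΔsub) hμI
  have hμΓlt : μ Γ < ⊤ := lt_of_le_of_lt (measure_mono hΓI) hμI
  have hΓ0 : ∀ x ∈ Γ, 0 ≤ φ x := fun x hx => hφ0 x (hΓI hx)
  have hΔ0 : ∀ x ∈ Δ, 0 ≤ φ x := fun x hx => hφ0 x (hΔsub hx)
  have hintΔ : IntegrableOn (fun x => φ x ^ p) Δ μ := hφint.mono_set hΔsub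
  obtain ⟨hmemI, hHI⟩ := holder_step μ I hI hμI hp hφm hφ0 hφint
  obtain ⟨hmemΔ, hHΔ⟩ := holder_step μ Δ hΔm hμΔlt hp hφm hΔ0 hintΔ
  haveI : IsFiniteMeasure (μ.restrict I) := ⟨by rwa [Measure.restrict_apply_univ]⟩
  have hφI : IntegrableOn φ I μ := hmemI.integrable (by
    exact_mod_cast ENNReal.one_le_ofReal.2 hp.le)
  have hφΓ : IntegrableOn φ Γ μ := hφI.mono_set hΓI
  have hφΔ : IntegrableOn φ Δ μ := hφI.mono_set hΔsub
  have hdisj : Disjoint Γ Δ := hΔ ▸ disjoint_sdiff_right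
  have hunion : Γ ∪ Δ = I := by rw [hΔ, union_diff_cancel hΓI]
  have hsplit : ∫ x in I, φ x ∂μ = (∫ x in Γ, φ x ∂μ) + (∫ x in Δ, φ x ∂μ) := by
    rw [← hunion, setIntegral_union hdisj hΔm hφΓ hφΔ]
  have hmeas : μ I = μ Γ + μ Δ := by rw [← hunion, measure_union hdisj hΔm]
  set a := ∫ x in Γ, φ x ∂μ with hadef
  set d := ∫ x in Δ, φ x ∂μ with hddef
  set α := (μ Γ).toReal with hαdef
  set δ := (μ Δ).toReal with hδdef
  have hα : 0 < α := ENNReal.toReal_pos hμΓ.ne' hμΓlt.ne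
  have hδ : 0 < δ := ENNReal.toReal_pos hμΔ.ne' hμΔlt.ne
  have hm : (μ I).toReal = α + δ := by rw [hmeas, ENNReal.toReal_add hμΓlt.ne hμΔlt.ne]
  have ha : 0 ≤ a := setIntegral_nonneg hΓ hΓ0
  have hd : 0 ≤ d := setIntegral_nonneg hΔm hΔ0
  have hradon := radon_aux ha hd hα hδ hp
  have hδp : 0 < δ ^ (p - 1) := Real.rpow_pos_of_pos hδ _
  have hstep : d ^ p / δ ^ (p - 1) ≤ ∫ x in Δ, φ x ^ p ∂μ :=
    (div_le_iff₀ hδp).2 (by rw [mul_comm]; exact hHΔ)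
  rw [hsplit, hm]
  have e1 : 1 / (α + δ) ^ (p - 1) * (a + d) ^ p = (a + d) ^ p / (α + δ) ^ (p - 1) := by ring
  have e2 : 1 / α ^ (p - 1) * a ^ p = a ^ p / α ^ (p - 1) := by ring
  rw [e1, e2]
  linarith [hradon, hstep]
end
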